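/- arXiv:cs/0508062 — 2 statements merged into one kernel-verified Lean document; each statement's English description precedes it below -/
import Mathlib

section
/- Let p ∈ (0, 1/2) be fixed. Then as ε → 0⁺, H₂⁻¹(H₂(p) + ε(1 - H₂(p))) = p + ε(1 - H₂(p))/log₂((1-p)/p) - ε²(1 - H₂(p))²·(log₂ e)/(2p(p-1)·(log₂((1-p)/p))³) + O(ε³). -/
open Set

private lemma poly_bound {f f' : ℝ → ℝ} {r C : ℝ} {n : ℕ} (hC : 0 ≤ C)
    (hd : ∀ x ∈ Set.Icc (0:ℝ) r, HasDerivAt f (f' x) x)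
    (h0 : f 0 = 0)
    (hb : ∀ x ∈ Set.Icc (0:ℝ) r, |f' x| ≤ C * x ^ n) :
    ∀ x ∈ Set.Icc (0:ℝ) r, |f x| ≤ C * x ^ (n+1) / (n+1) := by
  intro x hx
  have key := image_norm_le_of_norm_deriv_right_le_deriv_boundary
    (f := f) (f' := f') (a := 0) (b := r)
    (B := fun y => C * y ^ (n+1) / (n+1)) (B' := fun y => C * y ^ n)
    (fun y hy => ((hd y hy).continuousAt).continuousWithinAt)
    (fun y hy => ((hd y ⟨hy.1, hy.2.le⟩).hasDerivWithinAt))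
    (by simp [h0])
    (fun y => by
      have h := ((hasDerivAt_pow (n+1) y).const_mul C).div_const ((n:ℝ)+1)
      refine h.congr_deriv ?_
      have : ((n:ℝ)+1) ≠ 0 := by positivity
      push_cast
      field_simp)
    (fun y hy => by
      simpa [Real.norm_eq_abs] using hb y ⟨hy.1, hy.2.le⟩)
  simpa [Real.norm_eq_abs] using key hx

private lemma cubic_bound {g g1 g2 g3 : ℝ → ℝ} {r M : ℝ} (hM : 0 ≤ M)
    (hg : ∀ x ∈ Set.Icc (0:ℝ) r, HasDerivAt g (g1 x) x)
    (hg1 : ∀ x ∈ Set.Icc (0:ℝ) r, HasDerivAt g1 (g2 x) x)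
    (hg2 : ∀ x ∈ Set.Icc (0:ℝ) r, HasDerivAt g2 (g3 x) x)
    (h0 : g 0 = 0) (h10 : g1 0 = 0) (h20 : g2 0 = 0)
    (hb : ∀ x ∈ Set.Icc (0:ℝ) r, |g3 x| ≤ M) :
    ∀ x ∈ Set.Icc (0:ℝ) r, |g x| ≤ M * x ^ 3 / 6 := by
  have s2 : ∀ x ∈ Set.Icc (0:ℝ) r, |g2 x| ≤ M * x ^ 1 := by
    intro x hx
    have := poly_bound (n := 0) hM hg2 h20 (fun y hy => by simpa using hb y hy) x hx
    calc |g2 x| ≤ M * x ^ (0+1) / ((0:ℕ) + 1) := this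
      _ = M * x ^ 1 := by norm_num
  have s1 : ∀ x ∈ Set.Icc (0:ℝ) r, |g1 x| ≤ (M/2) * x ^ 2 := by
    intro x hx
    have := poly_bound (n := 1) (C := M) hM hg1 h10
      (fun y hy => s2 y hy) x hx
    calc |g1 x| ≤ M * x ^ (1+1) / ((1:ℕ)+1) := this
      _ = (M/2) * x ^ 2 := by push_cast; ring
  have s0 : ∀ x ∈ Set.Icc (0:ℝ) r, |g x| ≤ (M/2) * x ^ 3 / 3 := by
    intro x hx
    have := poly_bound (n := 2) (C := M/2) (by linarith) hg h0 s1 x hx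
    calc |g x| ≤ (M/2) * x ^ (2+1) / ((2:ℕ)+1) := this
      _ = (M/2) * x ^ 3 / 3 := by push_cast; ring
  intro x hx
  calc |g x| ≤ (M/2) * x^3 / 3 := s0 x hx
    _ = M * x ^ 3 / 6 := by ring

private lemma third_deriv_bound {p s : ℝ} (hp0 : 0 < p) (h1 : 0 < p + s)
    (h3 : 1/2 < 1 - (p + s)) (hs0 : 0 ≤ s) :
    |(-(((1:ℝ)-(p+s))^2)⁻¹ + ((p+s)^2)⁻¹)| ≤ 4 + 1/p^2 := by
  have e1 : (((1:ℝ)-(p+s))^2)⁻¹ ≤ 4 := by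
    have h4 : ((1:ℝ)/2)^2 ≤ (1-(p+s))^2 := by nlinarith
    have := inv_anti₀ (by norm_num : (0:ℝ) < (1/2)^2) h4
    norm_num at this
    linarith
  have e2 : (((p+s))^2)⁻¹ ≤ 1/p^2 := by
    have h4 : p^2 ≤ (p+s)^2 := by nlinarith
    have := inv_anti₀ (by positivity : (0:ℝ) < p^2) h4
    rw [one_div]
    linarith
  have e3 : (0:ℝ) ≤ (((1:ℝ)-(p+s))^2)⁻¹ := by positivity
  have e4 : (0:ℝ) ≤ (((p+s))^2)⁻¹ := by positivity
  rw [abs_le]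
  constructor <;> nlinarith

/-- Binary entropy function. -/
noncomputable def H₂ (x : ℝ) : ℝ := -x * Real.logb 2 x - (1 - x) * Real.logb 2 (1 - x)

set_option maxHeartbeats 2000000 in
theorem stmt_4 (p : ℝ) (hp0 : 0 < p) (hp : p < 1/2)
    (Hinv : ℝ → ℝ)
    (hinv_mem : ∀ y ∈ Set.Icc (0 : ℝ) 1, Hinv y ∈ Set.Icc (0 : ℝ) (1/2))
    (hinv_left : ∀ x ∈ Set.Icc (0 : ℝ) (1/2), Hinv (H₂ x) = x)
    (hinv_right : ∀ y ∈ Set.Icc (0 : ℝ) 1, H₂ (Hinv y) = y) :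
    ∃ C > 0, ∃ δ > 0, ∀ ε : ℝ, 0 < ε → ε < δ →
      |Hinv (H₂ p + ε * (1 - H₂ p))
        - (p + ε * (1 - H₂ p) / Real.logb 2 ((1 - p) / p)
          - ε ^ 2 * (1 - H₂ p) ^ 2 * Real.logb 2 (Real.exp 1)
            / (2 * p * (p - 1) * (Real.logb 2 ((1 - p) / p)) ^ 3))|
        ≤ C * ε ^ 3 := by
  have hp1 : p < 1 := by linarith
  have h1p : (0:ℝ) < 1 - p := by linarith
  have hpne : p ≠ 0 := ne_of_gt hp0
  have hpne1 : p ≠ 1 := by linarith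
  have hlog2 : (0:ℝ) < Real.log 2 := Real.log_pos (by norm_num)
  have hH2 : ∀ x : ℝ, H₂ x = Real.binEntropy x / Real.log 2 := by
    intro x
    simp only [H₂, Real.binEntropy, Real.logb, Real.log_inv]
    ring
  obtain ⟨Lφ, hLφdef⟩ : ∃ Lφ : ℝ, Lφ = Real.log (1-p) - Real.log p := ⟨_, rfl⟩
  have hLφ : 0 < Lφ := hLφdef ▸ sub_pos.2 (Real.log_lt_log hp0 (by linarith))
  obtain ⟨Eφ, hEφdef⟩ : ∃ Eφ : ℝ, Eφ = Real.log 2 - Real.binEntropy p := ⟨_, rfl⟩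
  have hEφ : 0 < Eφ := hEφdef ▸ sub_pos.2 (Real.binEntropy_lt_log_two.2 (by
    intro hcon; rw [hcon] at hp; norm_num at hp))
  have hE : 1 - H₂ p = Eφ / Real.log 2 := by
    rw [hH2, hEφdef]; field_simp
  obtain ⟨r, hrdef⟩ : ∃ r : ℝ, r = (1/2 - p)/2 := ⟨_, rfl⟩
  have hr : 0 < r := by rw [hrdef]; linarith
  obtain ⟨p2, hp2def⟩ : ∃ p2 : ℝ, p2 = p + r := ⟨_, rfl⟩
  have hp2a : p < p2 := by rw [hp2def]; linarith
  have hp2b : p2 < 1/2 := by rw [hp2def, hrdef]; linarith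
  have hp2pos : 0 < p2 := by linarith
  have h1p2 : (1:ℝ)/2 < 1 - p2 := by linarith
  obtain ⟨M, hMdef⟩ : ∃ M : ℝ, M = 4 + 1/p^2 := ⟨_, rfl⟩
  have hM0 : (0:ℝ) ≤ M := by rw [hMdef]; positivity
  obtain ⟨K, hKdef⟩ : ∃ K : ℝ, K = 1/(2*p*(1-p)*Lφ^3) := ⟨_, rfl⟩
  have hK : 0 < K := by
    rw [hKdef]
    exact div_pos one_pos (mul_pos (mul_pos (mul_pos two_pos hp0) h1p) (pow_pos hLφ 3))
  obtain ⟨T, hTdef⟩ : ∃ T : ℝ, T = Eφ/Lφ + K*Eφ^2 := ⟨_, rfl⟩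
  have hT : 0 < T := by
    rw [hTdef]
    exact add_pos (div_pos hEφ hLφ) (mul_pos hK (pow_pos hEφ 2))
  obtain ⟨m, hmdef⟩ : ∃ m : ℝ, m = Real.log (1-p2) - Real.log p2 := ⟨_, rfl⟩
  have hm : 0 < m := hmdef ▸ sub_pos.2 (Real.log_lt_log hp2pos (by linarith))
  obtain ⟨D, hDdef⟩ : ∃ D : ℝ, D = Real.binEntropy p2 - Real.binEntropy p := ⟨_, rfl⟩
  have h2inv : ((2:ℝ))⁻¹ = 1/2 := by norm_num
  have hD : 0 < D := by
    rw [hDdef]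
    have := Real.binEntropy_strictMonoOn (a := p) (b := p2)
      ⟨hp0.le, by rw [h2inv]; linarith⟩ ⟨by linarith, by rw [h2inv]; linarith⟩ hp2a
    linarith
  obtain ⟨C1, hC1def⟩ : ∃ C1 : ℝ, C1 = M*T^3/6 + Eφ^3*K/(p*(1-p)*Lφ) + Eφ^4*K^2/(2*p*(1-p)) := ⟨_, rfl⟩
  have hppos : 0 < p*(1-p)*Lφ := mul_pos (mul_pos hp0 h1p) hLφ
  have hppos2 : (0:ℝ) < 2*p*(1-p) := mul_pos (mul_pos two_pos hp0) h1p
  have hC1 : 0 ≤ C1 := by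
    rw [hC1def]
    have t1 : 0 ≤ M*T^3/6 := div_nonneg (mul_nonneg hM0 (pow_pos hT 3).le) (by norm_num)
    have t2 : 0 ≤ Eφ^3*K/(p*(1-p)*Lφ) :=
      div_nonneg (mul_nonneg (pow_pos hEφ 3).le hK.le) hppos.le
    have t3 : 0 ≤ Eφ^4*K^2/(2*p*(1-p)) :=
      div_nonneg (mul_nonneg (pow_pos hEφ 4).le (sq_nonneg K)) hppos2.le
    linarith
  -- Taylor bound for binEntropy around p
  have htay : ∀ s ∈ Set.Icc (0:ℝ) r,
      |Real.binEntropy (p+s) - Real.binEntropy p - Lφ*s + s^2/(2*p*(1-p))| ≤ M * s^3/6 := by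
    have hmem : ∀ s ∈ Set.Icc (0:ℝ) r, 0 < p + s ∧ p + s ≤ p2 ∧ 1/2 < 1 - (p + s) := by
      intro s hs
      refine ⟨by linarith [hs.1], by rw [hp2def]; linarith [hs.2], by
        have : p + s ≤ p2 := by rw [hp2def]; linarith [hs.2]
        linarith⟩
    apply cubic_bound (g1 := fun s => (Real.log (1-(p+s)) - Real.log (p+s)) - Lφ + s/(p*(1-p)))
      (g2 := fun s => (-(1-(p+s))⁻¹ - (p+s)⁻¹) + (p*(1-p))⁻¹)
      (g3 := fun s => -(((1-(p+s))^2)⁻¹) + ((p+s)^2)⁻¹) hM0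
    · intro s hs
      obtain ⟨h1, h2, h3⟩ := hmem s hs
      have hy0 : p + s ≠ 0 := ne_of_gt h1
      have hy1 : p + s ≠ 1 := by intro hc; rw [hc] at h3; norm_num at h3
      have hbin : HasDerivAt (fun u => Real.binEntropy (p+u))
          ((Real.log (1-(p+s)) - Real.log (p+s)) * 1) s :=
        (Real.hasDerivAt_binEntropy hy0 hy1).comp s ((hasDerivAt_id s).const_add p)
      have := ((hbin.sub_const (Real.binEntropy p)).sub
        ((hasDerivAt_id s).const_mul Lφ)).add ((hasDerivAt_pow 2 s).div_const (2*p*(1-p)))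
      refine this.congr_deriv ?_
      first
      | (field_simp; ring)
      | field_simp
    · intro s hs
      obtain ⟨h1, h2, h3⟩ := hmem s hs
      have hu : (1:ℝ)-(p+s) ≠ 0 := by intro hc; rw [hc] at h3; norm_num at h3
      have hv : p + s ≠ 0 := ne_of_gt h1
      have A : HasDerivAt (fun u : ℝ => 1-(p+u)) (-1) s := by
        simpa using ((hasDerivAt_id s).const_add p).const_sub 1
      have B : HasDerivAt (fun u : ℝ => p + u) 1 s := (hasDerivAt_id s).const_add p
      have := ((A.log hu).sub (B.log hv)).sub_const Lφ |>.add
        ((hasDerivAt_id s).div_const (p*(1-p)))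
      refine this.congr_deriv ?_
      first
      | (field_simp; ring)
      | field_simp
    · intro s hs
      obtain ⟨h1, h2, h3⟩ := hmem s hs
      have hu : (1:ℝ)-(p+s) ≠ 0 := by intro hc; rw [hc] at h3; norm_num at h3
      have hv : p + s ≠ 0 := ne_of_gt h1
      have A : HasDerivAt (fun u : ℝ => 1-(p+u)) (-1) s := by
        simpa using ((hasDerivAt_id s).const_add p).const_sub 1
      have B : HasDerivAt (fun u : ℝ => p + u) 1 s := (hasDerivAt_id s).const_add p
      have := (((A.inv hu).neg).sub (B.inv hv)).add_const (p*(1-p))⁻¹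
      refine this.congr_deriv ?_
      first
      | (field_simp; ring)
      | field_simp
    · simp
    · simp [hLφdef]
    · first
      | (field_simp [h1p.ne']; ring)
      | field_simp
    · intro s hs
      obtain ⟨h1, h2, h3⟩ := hmem s hs
      rw [hMdef]
      exact third_deriv_bound hp0 h1 h3 hs.1
  -- lower Lipschitz bound for binEntropy on [p, p2]
  have hlip : ∀ u v : ℝ, p ≤ u → u ≤ v → v ≤ p2 →
      m * (v - u) ≤ Real.binEntropy v - Real.binEntropy u := by
    intro u v hu huv hv
    rcases eq_or_lt_of_le huv with rfl | hlt
    · simp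
    · obtain ⟨c, hc, hc'⟩ := exists_hasDerivAt_eq_slope Real.binEntropy
        (fun y => Real.log (1-y) - Real.log y) hlt
        (Real.binEntropy_continuous.continuousOn)
        (fun y hy => Real.hasDerivAt_binEntropy
          ((hp0.trans_le hu).trans hy.1).ne'
          (((hy.2.trans_le hv).trans (hp2b.trans (by norm_num))).ne))
      have hc0 : 0 < c := hp0.trans_le (hu.trans hc.1.le)
      have hcp2 : c ≤ p2 := le_of_lt (lt_of_lt_of_le hc.2 hv)
      have l1 : Real.log (1-p2) ≤ Real.log (1-c) := by
        apply Real.log_le_log (by linarith)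
        linarith
      have l2 : Real.log c ≤ Real.log p2 := Real.log_le_log hc0 hcp2
      have h1 : m ≤ Real.log (1-c) - Real.log c := by rw [hmdef]; linarith
      have h2 : m * (v-u) ≤ (Real.log (1-c) - Real.log c) * (v-u) :=
        mul_le_mul_of_nonneg_right h1 (by linarith)
      rw [hc'] at h2
      calc m * (v-u) ≤ (Real.binEntropy v - Real.binEntropy u) / (v-u) * (v-u) := h2
        _ = Real.binEntropy v - Real.binEntropy u := by
            rw [div_mul_cancel₀ _ (sub_ne_zero.2 hlt.ne')]
  refine ⟨C1/m + 1, by have := div_nonneg hC1 hm.le; linarith,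
    min 1 (min (r/T) (D/Eφ)), lt_min one_pos (lt_min (div_pos hr hT) (div_pos hD hEφ)), ?_⟩
  intro ε hε hεδ
  have hε1 : ε ≤ 1 := le_of_lt (lt_of_lt_of_le hεδ (min_le_left _ _))
  have hεr : ε < r/T := lt_of_lt_of_le hεδ ((min_le_right _ _).trans (min_le_left _ _))
  have hεD : ε < D/Eφ := lt_of_lt_of_le hεδ ((min_le_right _ _).trans (min_le_right _ _))
  obtain ⟨a, hadef⟩ : ∃ a : ℝ, a = ε * Eφ := ⟨_, rfl⟩
  have ha : 0 < a := by rw [hadef]; exact mul_pos hε hEφ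
  have haD : a < D := by rw [hadef]; exact (lt_div_iff₀ hEφ).1 hεD
  obtain ⟨h, hhdef⟩ : ∃ h : ℝ, h = a/Lφ + K*a^2 := ⟨_, rfl⟩
  have hh0 : 0 < h := by
    rw [hhdef]; exact add_pos (div_pos ha hLφ) (mul_pos hK (pow_pos ha 2))
  have hhT : h ≤ ε*T := by
    rw [hhdef, hadef, hTdef]
    have h1 : ε^2 ≤ ε := by
      calc ε^2 = ε*ε := by ring
        _ ≤ 1*ε := mul_le_mul_of_nonneg_right hε1 hε.le
        _ = ε := one_mul ε
    have h2 : K*(ε*Eφ)^2 ≤ K*Eφ^2*ε := by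
      have : K*(ε*Eφ)^2 = K*Eφ^2*ε^2 := by ring
      rw [this]
      exact mul_le_mul_of_nonneg_left h1 (mul_nonneg hK.le (sq_nonneg Eφ))
    have h3 : ε*Eφ/Lφ = Eφ/Lφ*ε := by ring
    calc ε*Eφ/Lφ + K*(ε*Eφ)^2 ≤ Eφ/Lφ*ε + K*Eφ^2*ε := by rw [h3]; linarith
      _ = (Eφ/Lφ + K*Eφ^2)*ε := by ring
      _ = ε * (Eφ/Lφ + K*Eφ^2) := by ring
  have hhr : h < r := lt_of_le_of_lt hhT ((lt_div_iff₀ hT).1 hεr)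
  obtain ⟨q, hqdef⟩ : ∃ q : ℝ, q = p + h := ⟨_, rfl⟩
  have hqp2 : q ≤ p2 := by rw [hqdef, hp2def]; linarith
  -- the point x
  have hH2p0 : 0 ≤ H₂ p := by
    rw [hH2]
    exact div_nonneg (Real.binEntropy_nonneg hp0.le (by linarith)) hlog2.le
  have hH2p1 : H₂ p < 1 := by
    have := div_pos hEφ hlog2
    linarith [hE]
  have h1H : 0 ≤ 1 - H₂ p := by linarith
  obtain ⟨y, hydef⟩ : ∃ y : ℝ, y = H₂ p + ε * (1 - H₂ p) := ⟨_, rfl⟩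
  have hymem : y ∈ Set.Icc (0:ℝ) 1 := by
    constructor
    · rw [hydef]
      have := mul_nonneg hε.le h1H
      linarith
    · rw [hydef]
      have := mul_le_mul_of_nonneg_right hε1 h1H
      linarith
  obtain ⟨x, hxdef⟩ : ∃ x : ℝ, x = Hinv y := ⟨_, rfl⟩
  have hxmem : x ∈ Set.Icc (0:ℝ) (1/2) := hxdef ▸ hinv_mem y hymem
  have hxφ : Real.binEntropy x = Real.binEntropy p + a := by
    have h1 : H₂ x = y := by rw [hxdef]; exact hinv_right y hymem
    rw [hH2] at h1
    have h2 : Real.binEntropy x / Real.log 2 = (Real.binEntropy p + a) / Real.log 2 := by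
      rw [h1, hydef, hE, hH2 p, hadef]
      first
      | (field_simp [hlog2.ne']; ring)
      | field_simp [hlog2.ne']
    field_simp [hlog2.ne'] at h2
    exact h2
  have hxmem' : x ∈ Set.Icc (0:ℝ) 2⁻¹ := by rwa [h2inv]
  have hmono := Real.binEntropy_strictMonoOn
  have hxp : p ≤ x := by
    by_contra hcon
    push_neg at hcon
    have := hmono hxmem' ⟨hp0.le, by rw [h2inv]; linarith⟩ hcon
    rw [hxφ] at this
    linarith
  have hxp2 : x ≤ p2 := by
    by_contra hcon
    push_neg at hcon
    have h5 := hmono ⟨by linarith, by rw [h2inv]; linarith⟩ hxmem' hcon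
    rw [hxφ] at h5
    rw [hDdef] at haD
    linarith
  -- key algebraic identity
  have hkey : Lφ*h - h^2/(2*p*(1-p)) - a = -(a^3*K/(p*(1-p)*Lφ) + a^4*K^2/(2*p*(1-p))) := by
    rw [hhdef, hKdef]
    field_simp
    ring
  -- bound |binEntropy x - binEntropy q|
  have hg_h := htay h ⟨hh0.le, hhr.le⟩
  have hsplit : Real.binEntropy x - Real.binEntropy q =
      -((Real.binEntropy (p+h) - Real.binEntropy p - Lφ*h + h^2/(2*p*(1-p)))
        + (Lφ*h - h^2/(2*p*(1-p)) - a)) := by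
    rw [hxφ, hqdef]; ring
  have hclose : |Real.binEntropy x - Real.binEntropy q| ≤ C1 * ε^3 := by
    rw [hsplit, abs_neg]
    refine (abs_add_le _ _).trans ?_
    have b0 : |Lφ*h - h^2/(2*p*(1-p)) - a| = a^3*K/(p*(1-p)*Lφ) + a^4*K^2/(2*p*(1-p)) := by
      rw [hkey, abs_neg, abs_of_nonneg]
      have t2 : 0 ≤ a^3*K/(p*(1-p)*Lφ) :=
        div_nonneg (mul_nonneg (pow_pos ha 3).le hK.le) hppos.le
      have t3 : 0 ≤ a^4*K^2/(2*p*(1-p)) :=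
        div_nonneg (mul_nonneg (pow_pos ha 4).le (sq_nonneg K)) hppos2.le
      linarith
    rw [b0]
    have b1 : M*h^3/6 ≤ M*T^3/6*ε^3 := by
      have hhc : h^3 ≤ (ε*T)^3 := pow_le_pow_left₀ hh0.le hhT 3
      have := mul_le_mul_of_nonneg_left hhc hM0
      have heq : M*(ε*T)^3 = (M*T^3*ε^3) := by ring
      calc M*h^3/6 ≤ M*(ε*T)^3/6 := by linarith
        _ = M*T^3/6*ε^3 := by ring
    have b2 : a^3*K/(p*(1-p)*Lφ) = Eφ^3*K/(p*(1-p)*Lφ)*ε^3 := by rw [hadef]; ring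
    have b3 : a^4*K^2/(2*p*(1-p)) ≤ Eφ^4*K^2/(2*p*(1-p))*ε^3 := by
      rw [hadef]
      have he4 : ε^4 ≤ ε^3 := pow_le_pow_of_le_one hε.le hε1 (by norm_num)
      have heq1 : (ε*Eφ)^4/(2*p*(1-p))*K^2 = ε^4 * (Eφ^4*K^2/(2*p*(1-p))) := by ring
      have heq2 : (ε*Eφ)^4*K^2/(2*p*(1-p)) = ε^4 * (Eφ^4*K^2/(2*p*(1-p))) := by ring
      rw [heq2]
      have hnn : 0 ≤ Eφ^4*K^2/(2*p*(1-p)) :=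
        div_nonneg (mul_nonneg (pow_pos hEφ 4).le (sq_nonneg K)) hppos2.le
      calc ε^4 * (Eφ^4*K^2/(2*p*(1-p))) ≤ ε^3 * (Eφ^4*K^2/(2*p*(1-p))) :=
            mul_le_mul_of_nonneg_right he4 hnn
        _ = Eφ^4*K^2/(2*p*(1-p))*ε^3 := by ring
    calc |Real.binEntropy (p+h) - Real.binEntropy p - Lφ*h + h^2/(2*p*(1-p))|
          + (a^3*K/(p*(1-p)*Lφ) + a^4*K^2/(2*p*(1-p)))
        ≤ M*T^3/6*ε^3 + (Eφ^3*K/(p*(1-p)*Lφ)*ε^3 + Eφ^4*K^2/(2*p*(1-p))*ε^3) := by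
          rw [b2]
          linarith [hg_h, b1, b3]
      _ = C1 * ε^3 := by rw [hC1def]; ring
  -- transfer to |x - q|
  have hmx : m * |x - q| ≤ |Real.binEntropy x - Real.binEntropy q| := by
    rcases le_total x q with hle | hle
    · have hl := hlip x q hxp hle hqp2
      calc m * |x - q| = m * (q - x) := by rw [abs_sub_comm, abs_of_nonneg (by linarith)]
        _ ≤ Real.binEntropy q - Real.binEntropy x := hl
        _ ≤ |Real.binEntropy x - Real.binEntropy q| := by
            rw [abs_sub_comm]; exact le_abs_self _
    · have hl := hlip q x (by rw [hqdef]; linarith) hle hxp2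
      calc m * |x - q| = m * (x - q) := by rw [abs_of_nonneg (by linarith)]
        _ ≤ Real.binEntropy x - Real.binEntropy q := hl
        _ ≤ |Real.binEntropy x - Real.binEntropy q| := le_abs_self _
  have hfinal : |x - q| ≤ (C1/m + 1) * ε^3 := by
    have h1 : m * |x - q| ≤ C1 * ε^3 := le_trans hmx hclose
    have h2 : |x - q| ≤ C1 * ε^3 / m := by
      rw [le_div_iff₀ hm]
      calc |x - q| * m = m * |x - q| := by ring
        _ ≤ C1 * ε^3 := h1
    have h3 : C1 * ε^3 / m ≤ (C1/m + 1) * ε^3 := by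
      have heq : C1 * ε^3/m = (C1/m)*ε^3 := by field_simp
      rw [heq]
      exact mul_le_mul_of_nonneg_right (by linarith) (pow_pos hε 3).le
    linarith
  -- identify the statement expression with q
  have l1 : Real.logb 2 ((1 - p) / p) = Lφ / Real.log 2 := by
    rw [Real.logb, Real.log_div (by linarith) hpne, hLφdef]
  have l2 : Real.logb 2 (Real.exp 1) = 1 / Real.log 2 := by
    rw [Real.logb, Real.log_exp]
  have hp1' : p - 1 ≠ 0 := by intro hc; apply hpne1; linarith
  have hexpr : p + ε * (1 - H₂ p) / Real.logb 2 ((1 - p) / p)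
      - ε ^ 2 * (1 - H₂ p) ^ 2 * Real.logb 2 (Real.exp 1)
        / (2 * p * (p - 1) * (Real.logb 2 ((1 - p) / p)) ^ 3) = q := by
    rw [l1, l2, hE, hqdef, hhdef, hKdef, hadef]
    field_simp
    ring
  rw [hexpr, ← hydef, ← hxdef]
  exact hfinal
end

section
/- Fix p ∈ (0, 1/2), let C = 1 - H₂(p), and for ε ∈ (0,1) let R = (1-ε)C and δ = H₂⁻¹(1 - R). Define E₀(R, p) = T(δ, p) + R - 1, where T(x, y) = -x·log₂ y - (1-x)·log₂(1-y). Then as ε → 0⁺, E₀(R, p) = c_p · ε² + O(ε³), where c_p = (1 - H₂(p))²·(log₂ e) / (2p(1-p)·(log₂((1-p)/p))²) > 0. -/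
noncomputable def T (x y : ℝ) : ℝ := -x * Real.logb 2 y - (1 - x) * Real.logb 2 (1 - y)

lemma H2_eq (x : ℝ) : H₂ x = Real.binEntropy x / Real.log 2 := by
  simp only [H₂, Real.binEntropy, Real.logb, Real.log_inv]
  ring

lemma log2_pos : (0:ℝ) < Real.log 2 := Real.log_pos one_lt_two

lemma H2_hasDeriv {x : ℝ} (h0 : 0 < x) (h1 : x < 1) :
    HasDerivAt H₂ (Real.logb 2 ((1-x)/x)) x := by
  have h := (Real.hasDerivAt_binEntropy h0.ne' (by linarith)).div_const (Real.log 2)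
  have hfun : (fun y => Real.binEntropy y / Real.log 2) = H₂ := funext fun y => (H2_eq y).symm
  rw [hfun] at h
  refine h.congr_deriv ?_; symm
  rw [Real.logb, Real.log_div (by linarith) h0.ne']

lemma D1_hasDeriv {x : ℝ} (h0 : 0 < x) (h1 : x < 1) :
    HasDerivAt (fun t => Real.logb 2 ((1-t)/t)) (-(1/(x*(1-x)*Real.log 2))) x := by
  have hg : HasDerivAt (fun t : ℝ => (1-t)/t) (((-1)*x - (1-x)*1)/x^2) x :=
    ((hasDerivAt_id x).const_sub 1).div (hasDerivAt_id x) h0.ne'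
  have hgx : (1-x)/x ≠ 0 := ne_of_gt (div_pos (by linarith) h0)
  have hlog := hg.log hgx
  have hfe : (fun t => Real.logb 2 ((1-t)/t)) = fun t => Real.log ((1-t)/t) / Real.log 2 := by
    funext t; rw [Real.logb]
  rw [hfe]
  have := hlog.div_const (Real.log 2)
  refine this.congr_deriv ?_; symm
  have h1x : (1:ℝ) - x ≠ 0 := by linarith
  field_simp
  ring

lemma H2_mono : StrictMonoOn H₂ (Set.Icc (0:ℝ) (1/2)) := by
  intro a ha b hb hab
  rw [H2_eq, H2_eq]
  have h12 : (1:ℝ)/2 = 2⁻¹ := by norm_num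
  rw [h12] at ha hb
  exact div_lt_div_of_pos_right (Real.binEntropy_strictMonoOn ha hb hab) log2_pos

lemma H2_zero : H₂ 0 = 0 := by simp [H₂]

lemma H2_half : H₂ (1/2) = 1 := by
  have h : Real.logb 2 (1/2) = -1 := by
    rw [one_div, Real.logb_inv, Real.logb_self_eq_one one_lt_two]
  norm_num [H₂, h]

theorem stmt_5 (p : ℝ) (hp0 : 0 < p) (hp : p < 1/2)
    (Hinv : ℝ → ℝ)
    (hinv_mem : ∀ y ∈ Set.Icc (0 : ℝ) 1, Hinv y ∈ Set.Icc (0 : ℝ) (1/2))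
    (hinv_left : ∀ x ∈ Set.Icc (0 : ℝ) (1/2), Hinv (H₂ x) = x)
    (hinv_right : ∀ y ∈ Set.Icc (0 : ℝ) 1, H₂ (Hinv y) = y)
    (C : ℝ) (hC : C = 1 - H₂ p)
    (c_p : ℝ)
    (hc_p : c_p = (1 - H₂ p) ^ 2 * Real.logb 2 (Real.exp 1)
        / (2 * p * (1 - p) * (Real.logb 2 ((1 - p) / p)) ^ 2)) :
    c_p > 0 ∧
    ∃ K > 0, ∃ δ > 0, ∀ ε : ℝ, 0 < ε → ε < δ →
      |(T (Hinv (1 - (1 - ε) * C)) p + (1 - ε) * C - 1) - c_p * ε ^ 2| ≤ K * ε ^ 3 := by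
  have hp1 : p < 1 := by linarith
  have h1p : (0:ℝ) < 1 - p := by linarith
  have hlog2 : (0:ℝ) < Real.log 2 := log2_pos
  set L := Real.logb 2 ((1-p)/p) with hLdef
  clear_value L
  have hL : 0 < L := by
    rw [hLdef]
    exact Real.logb_pos one_lt_two (by rw [lt_div_iff₀ hp0]; linarith)
  set q := p/2 + 1/4 with hqdef
  clear_value q
  have hpq : p < q := by rw [hqdef]; linarith
  have hq2 : q < 1/2 := by rw [hqdef]; linarith
  have hq0 : 0 < q := by rw [hqdef]; linarith
  have hpmem : p ∈ Set.Icc (0:ℝ) (1/2) := ⟨hp0.le, hp.le⟩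
  have hqmem : q ∈ Set.Icc (0:ℝ) (1/2) := ⟨hq0.le, hq2.le⟩
  have h0mem : (0:ℝ) ∈ Set.Icc (0:ℝ) (1/2) := by norm_num
  have h2mem : (1:ℝ)/2 ∈ Set.Icc (0:ℝ) (1/2) := by norm_num
  have hH2p0 : 0 < H₂ p := by
    have := H2_mono h0mem hpmem hp0
    rwa [H2_zero] at this
  have hH2pq : H₂ p < H₂ q := H2_mono hpmem hqmem hpq
  have hH2q1 : H₂ q < 1 := by
    have := H2_mono hqmem h2mem hq2
    rwa [H2_half] at this
  have hC0 : 0 < C := by rw [hC]; linarith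
  set m := Real.logb 2 ((1-q)/q) with hmdef
  clear_value m
  have hm : 0 < m := by
    rw [hmdef]
    exact Real.logb_pos one_lt_two (by rw [lt_div_iff₀ hq0]; linarith)
  have hcp_pos : c_p > 0 := by
    rw [hc_p, ← hC]
    have hlogbe : Real.logb 2 (Real.exp 1) = 1/Real.log 2 := by
      rw [Real.logb, Real.log_exp]
    rw [hlogbe]
    apply div_pos
    · exact mul_pos (pow_pos hC0 2) (one_div_pos.mpr hlog2)
    · exact mul_pos (mul_pos (mul_pos two_pos hp0) h1p) (pow_pos hL 2)
  refine ⟨hcp_pos, ?_⟩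
  set A := 1/(p^2*(1-p)^2*Real.log 2) with hAdef
  clear_value A
  set Bm := 1/(p*(1-p)*Real.log 2) with hBmdef
  clear_value Bm
  have hA : 0 < A := by
    rw [hAdef]
    exact one_div_pos.mpr (mul_pos (mul_pos (pow_pos hp0 2) (pow_pos h1p 2)) hlog2)
  have hBm : 0 < Bm := by
    rw [hBmdef]
    exact one_div_pos.mpr (mul_pos (mul_pos hp0 h1p) hlog2)
  set K := ((A*(C/m))*(C/m)^2 + Bm*((Bm*(C/m)^2/(2*L))*(C/m + C/L)))/2 with hKdef
  clear_value K
  have hCm : 0 < C/m := div_pos hC0 hm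
  have hCL : 0 < C/L := div_pos hC0 hL
  have h2L : (0:ℝ) < 2*L := mul_pos two_pos hL
  have hK : 0 < K := by
    rw [hKdef]
    apply div_pos _ two_pos
    apply add_pos
    · exact mul_pos (mul_pos hA hCm) (pow_pos hCm 2)
    · exact mul_pos hBm (mul_pos (div_pos (mul_pos hBm (pow_pos hCm 2)) h2L)
        (add_pos hCm hCL))
  refine ⟨K, hK, (H₂ q - H₂ p)/C, div_pos (by linarith) hC0, ?_⟩
  intro ε hε hεδ
  have hεC : ε*C < H₂ q - H₂ p := (lt_div_iff₀ hC0).mp hεδ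
  have hεC0 : 0 < ε*C := mul_pos hε hC0
  set y := 1 - (1-ε)*C with hydef
  clear_value y
  have hy_eq : y = H₂ p + ε*C := by rw [hydef, hC]; ring
  have hymem : y ∈ Set.Icc (0:ℝ) 1 := by
    constructor
    · rw [hy_eq]; linarith
    · rw [hy_eq]; linarith
  set d := Hinv y with hddef
  clear_value d
  have hdmem : d ∈ Set.Icc (0:ℝ) (1/2) := by rw [hddef]; exact hinv_mem y hymem
  have hH2d : H₂ d = y := by rw [hddef]; exact hinv_right y hymem
  have hpd : p < d := by
    by_contra h
    push_neg at h
    have : H₂ d ≤ H₂ p := H2_mono.monotoneOn hdmem hpmem h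
    rw [hH2d, hy_eq] at this
    linarith
  have hdq : d < q := by
    by_contra h
    push_neg at h
    have : H₂ q ≤ H₂ d := H2_mono.monotoneOn hqmem hdmem h
    rw [hH2d, hy_eq] at this
    linarith
  have hd0 : 0 < d := lt_trans hp0 hpd
  have hd1 : d < 1 := by linarith [hdq, hq2]
  set u := d - p with hudef
  clear_value u
  have hu0 : 0 < u := by rw [hudef]; exact sub_pos.mpr hpd
  have hεC_eq : H₂ d - H₂ p = ε*C := by rw [hH2d, hy_eq]; ring
  -- helper for points in [p, d]
  have hIccd : ∀ t ∈ Set.Icc p d, 0 < t ∧ t < 1 :=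
    fun t ht => ⟨lt_of_lt_of_le hp0 ht.1, lt_of_le_of_lt ht.2 hd1⟩
  have hIood : ∀ t ∈ Set.Ioo p d, 0 < t ∧ t < 1 :=
    fun t ht => ⟨lt_trans hp0 ht.1, lt_trans ht.2 hd1⟩
  -- MVT (a): get bound u ≤ ε*C/m
  obtain ⟨ζ, hζ, hζ_eq⟩ := exists_hasDerivAt_eq_slope H₂ (fun t => Real.logb 2 ((1-t)/t)) hpd
    (fun t ht => ((H2_hasDeriv (hIccd t ht).1 (hIccd t ht).2).continuousAt.continuousWithinAt))
    (fun t ht => H2_hasDeriv (hIood t ht).1 (hIood t ht).2)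
  have hζ0 : 0 < ζ := lt_trans hp0 hζ.1
  have hζq : ζ < q := lt_trans hζ.2 hdq
  have hmζ : m ≤ Real.logb 2 ((1-ζ)/ζ) := by
    rw [hmdef]
    apply Real.logb_le_logb_of_le one_lt_two (div_pos (by linarith only [hq2] : (0:ℝ) < 1 - q) hq0)
    rw [div_le_div_iff₀ hq0 hζ0]
    linarith only [hζq]
  have hu_le : u ≤ ε*C/m := by
    have h1 : Real.logb 2 ((1-ζ)/ζ) * u = ε*C := by
      have hdp : d - p ≠ 0 := ne_of_gt (sub_pos.mpr hpd)
      rw [hζ_eq, hεC_eq, hudef, div_mul_cancel₀ _ hdp]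
    rw [le_div_iff₀ hm]
    have hmul := mul_le_mul_of_nonneg_left hmζ hu0.le
    calc u*m ≤ Real.logb 2 ((1-ζ)/ζ)*u := by linarith only [hmul]
      _ = ε*C := h1
  -- Cauchy MVT for G := fun t => H₂ t - H₂ p - L*(t-p)
  obtain ⟨c, hc, hc_eq⟩ := exists_ratio_hasDerivAt_eq_ratio_slope
    (fun t => H₂ t - H₂ p - L*(t-p)) (fun t => Real.logb 2 ((1-t)/t) - L) hpd
    (fun t ht => (((H2_hasDeriv (hIccd t ht).1 (hIccd t ht).2).sub_const (H₂ p)).sub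
      (((hasDerivAt_id t).sub_const p).const_mul L)).continuousAt.continuousWithinAt)
    (fun t ht => by
      have := ((H2_hasDeriv (hIood t ht).1 (hIood t ht).2).sub_const (H₂ p)).sub
        (((hasDerivAt_id t).sub_const p).const_mul L)
      exact this.congr_deriv (by ring))
    (fun t => (t-p)^2) (fun t => 2*(t-p))
    (fun t ht => (((hasDerivAt_id t).sub_const p).pow 2).continuousAt.continuousWithinAt)
    (fun t ht => by
      have := ((hasDerivAt_id t).sub_const p).pow 2
      exact this.congr_deriv (by simp))
  have hcp : 0 < c - p := sub_pos.mpr hc.1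
  -- MVT on D1 over (p, c)
  obtain ⟨η, hη, hη_eq⟩ := exists_hasDerivAt_eq_slope
    (fun t => Real.logb 2 ((1-t)/t)) (fun t => -(1/(t*(1-t)*Real.log 2))) hc.1
    (fun t ht => by
      have ht' : 0 < t ∧ t < 1 := hIccd t ⟨ht.1, le_trans ht.2 hc.2.le⟩
      exact (D1_hasDeriv ht'.1 ht'.2).continuousAt.continuousWithinAt)
    (fun t ht => by
      have ht' : 0 < t ∧ t < 1 := hIood t ⟨ht.1, lt_trans ht.2 hc.2⟩
      exact D1_hasDeriv ht'.1 ht'.2)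
  have hη_mem : p < η ∧ η < d := ⟨hη.1, lt_trans hη.2 hc.2⟩
  have hη0 : 0 < η := lt_trans hp0 hη_mem.1
  have hηq : η < q := lt_trans hη_mem.2 hdq
  have hη2 : η < 1/2 := lt_trans hηq hq2
  have h1η : 0 < 1 - η := by linarith
  set W := 1/(η*(1-η)*Real.log 2) with hWdef
  clear_value W
  have hW : 0 < W := by
    rw [hWdef]
    exact one_div_pos.mpr (mul_pos (mul_pos hη0 h1η) hlog2)
  -- combine Cauchy and MVT: L*u - ε*C = W*u^2/2
  have hDc : Real.logb 2 ((1-c)/c) - L = -W * (c - p) := by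
    have h5 := hη_eq
    rw [← hLdef] at h5
    rw [eq_div_iff (ne_of_gt hcp)] at h5
    linarith
  have hGd : ε*C - L*u = -W * u^2 / 2 := by
    have h2 : ((d-p)^2 - (p-p)^2) * (Real.logb 2 ((1-c)/c) - L)
        = ((H₂ d - H₂ p - L*(d-p)) - (H₂ p - H₂ p - L*(p-p))) * (2*(c-p)) := hc_eq
    rw [hDc] at h2
    have h3 : ((d-p)^2 * (-W)) * (c-p) = ((H₂ d - H₂ p - L*(d-p)) * 2) * (c-p) := by
      linear_combination h2
    have h4 := mul_right_cancel₀ (ne_of_gt hcp) h3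
    rw [hεC_eq] at h4
    rw [hudef]
    linear_combination -(h4 / 2)
  have hE : T d p + (1-ε)*C - 1 = L*u - ε*C := by
    have hLsplit : L = Real.logb 2 (1-p) - Real.logb 2 p := by
      rw [hLdef, Real.logb_div (by linarith) hp0.ne']
    simp only [T]
    rw [hC, hLsplit, hudef]
    simp only [H₂]
    ring
  have hE' : T d p + (1-ε)*C - 1 = W*u^2/2 := by
    rw [hE]; linarith only [hGd]
  -- c_p * ε^2 = Bm * v^2 / 2  with v = ε*C/L
  set v := ε*C/L with hvdef
  clear_value v
  have hv0 : 0 < v := by rw [hvdef]; exact div_pos hεC0 hL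
  have hcp_eq : c_p*ε^2 = Bm*v^2/2 := by
    rw [hc_p, ← hC]
    have hlogbe : Real.logb 2 (Real.exp 1) = 1/Real.log 2 := by
      rw [Real.logb, Real.log_exp]
    rw [hlogbe, hBmdef, hvdef]
    field_simp
  -- u - v bound
  have huv : u - v = W*u^2/(2*L) := by
    have hWu : L*u - ε*C = W*u^2/2 := by linarith only [hGd]
    have hv_eq : v*L = ε*C := by rw [hvdef]; field_simp
    rw [eq_div_iff (ne_of_gt h2L)]
    linear_combination 2*hWu - 2*hv_eq
  have huv0 : 0 ≤ u - v := by
    rw [huv]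
    exact div_nonneg (mul_nonneg hW.le (sq_nonneg u)) h2L.le
  -- |W - Bm| ≤ A * u
  have hpη : p*(1-p) ≤ η*(1-η) := by
    have h7 : 0 ≤ (η - p)*(1 - η - p) :=
      mul_nonneg (by linarith only [hη_mem.1]) (by linarith only [hη2, hp])
    linarith only [h7]
  have hden : (0:ℝ) < (η*(1-η))*(p*(1-p))*Real.log 2 :=
    mul_pos (mul_pos (mul_pos hη0 h1η) (mul_pos hp0 h1p)) hlog2
  have hden2 : (0:ℝ) < (p*(1-p))*(p*(1-p))*Real.log 2 :=
    mul_pos (mul_pos (mul_pos hp0 h1p) (mul_pos hp0 h1p)) hlog2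
  have hWBm : |W - Bm| ≤ A*u := by
    have key : W - Bm = -((η-p)*(1-(η+p))/((η*(1-η))*(p*(1-p))*Real.log 2)) := by
      rw [hWdef, hBmdef]
      field_simp
      ring
    have hnum : (η-p)*(1-(η+p)) ≤ u*1 := by
      have h8 : η - p ≤ u := by rw [hudef]; linarith only [hη_mem.2]
      have h9 : 1-(η+p) ≤ 1 := by linarith only [hη0, hp0]
      exact mul_le_mul h8 h9 (by linarith only [hη2, hp]) hu0.le
    have hden_le : (p*(1-p))*(p*(1-p))*Real.log 2 ≤ (η*(1-η))*(p*(1-p))*Real.log 2 := by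
      apply mul_le_mul_of_nonneg_right _ hlog2.le
      exact mul_le_mul_of_nonneg_right hpη (mul_pos hp0 h1p).le
    rw [key, abs_neg, abs_of_nonneg (div_nonneg
      (mul_nonneg (by linarith only [hη_mem.1]) (by linarith only [hη2, hp])) hden.le)]
    calc (η-p)*(1-(η+p))/((η*(1-η))*(p*(1-p))*Real.log 2)
        ≤ u*1/((p*(1-p))*(p*(1-p))*Real.log 2) :=
          div_le_div₀ (mul_nonneg hu0.le zero_le_one) hnum hden2 hden_le
      _ = A*u := by
          rw [hAdef]
          ring
  have hWle : W ≤ Bm := by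
    rw [hWdef, hBmdef]
    apply one_div_le_one_div_of_le (mul_pos (mul_pos hp0 h1p) hlog2)
    exact mul_le_mul_of_nonneg_right hpη hlog2.le
  -- main decomposition
  have hX : (T d p + (1-ε)*C - 1) - c_p*ε^2 = ((W - Bm)*u^2 + Bm*(u^2 - v^2))/2 := by
    rw [hE', hcp_eq]; ring
  set U := ε*(C/m) with hUdef
  clear_value U
  have hUu : u ≤ U := by rw [hUdef]; rw [mul_div_assoc] at hu_le; exact hu_le
  have hU0 : 0 < U := by rw [hUdef]; exact mul_pos hε hCm
  set V := ε*(C/L) with hVdef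
  clear_value V
  have hvV : v = V := by rw [hvdef, hVdef]; ring
  have hV0 : 0 < V := by rw [hVdef]; exact mul_pos hε hCL
  -- bound each piece
  have hb1 : |W - Bm| * u^2 ≤ (A*U)*U^2 := by
    calc |W - Bm| * u^2 ≤ (A*u)*u^2 := mul_le_mul_of_nonneg_right hWBm (sq_nonneg u)
      _ = A*u^3 := by ring
      _ ≤ A*U^3 := mul_le_mul_of_nonneg_left (pow_le_pow_left₀ hu0.le hUu 3) hA.le
      _ = (A*U)*U^2 := by ring
  have hb2 : Bm*((u-v)*(u+v)) ≤ Bm*((Bm*U^2/(2*L))*(U+V)) := by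
    apply mul_le_mul_of_nonneg_left _ hBm.le
    apply mul_le_mul
    · rw [huv]
      apply div_le_div₀ (mul_nonneg hBm.le (sq_nonneg U)) _ h2L le_rfl
      exact mul_le_mul hWle (pow_le_pow_left₀ hu0.le hUu 2) (sq_nonneg u) hBm.le
    · rw [hvV]; exact add_le_add_left hUu V
    · linarith only [hu0, hv0]
    · exact div_nonneg (mul_nonneg hBm.le (sq_nonneg U)) h2L.le
  have habs : |(T d p + (1-ε)*C - 1) - c_p*ε^2|
      ≤ (|W - Bm| * u^2 + Bm*((u-v)*(u+v)))/2 := by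
    rw [hX, abs_div, abs_two]
    apply (div_le_div_iff_of_pos_right two_pos).mpr
    calc |(W - Bm)*u^2 + Bm*(u^2 - v^2)|
        ≤ |(W - Bm)*u^2| + |Bm*(u^2 - v^2)| := abs_add_le _ _
      _ = |W - Bm| * u^2 + Bm*((u-v)*(u+v)) := by
          rw [abs_mul, abs_mul, abs_of_nonneg (sq_nonneg u), abs_of_nonneg hBm.le]
          congr 1
          have h6 : u^2 - v^2 = (u-v)*(u+v) := by ring
          rw [h6, abs_of_nonneg (mul_nonneg huv0 (by linarith))]
  have hKε : ((A*U)*U^2 + Bm*((Bm*U^2/(2*L))*(U+V)))/2 = K*ε^3 := by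
    rw [hKdef, hUdef, hVdef]
    ring
  calc |(T d p + (1-ε)*C - 1) - c_p*ε^2|
      ≤ (|W - Bm| * u^2 + Bm*((u-v)*(u+v)))/2 := habs
    _ ≤ ((A*U)*U^2 + Bm*((Bm*U^2/(2*L))*(U+V)))/2 := by linarith only [hb1, hb2]
    _ = K*ε^3 := hKε
end
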